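/- arXiv:2104.00081 — 2 statements merged into one kernel-verified Lean document; each statement's English description precedes it below -/
import Mathlib

section
/- Let μ be an uncountable regular cardinal and let ζ be an ordinal with μ ≤ ζ and |ζ| = μ. Then for any two bijections f and g from the set of ordinals below μ onto the set of ordinals below ζ, the set {γ < μ : otp(f '' γ) = otp(g '' γ)} contains a club in μ. -/
universe u

/-- `C` is a club in the ordinal `μ`: a set of ordinals below `μ` that is
unbounded in `μ` and closed (every limit `δ < μ` in which `C` is unbounded
belongs to `C`). -/
def IsClubIn (C : Set Ordinal.{u}) (μ : Ordinal.{u}) : Prop :=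
  C ⊆ Set.Iio μ ∧
  (∀ α < μ, ∃ γ ∈ C, α ≤ γ) ∧
  (∀ δ < μ, Order.IsSuccLimit δ → (∀ α < δ, ∃ γ ∈ C, α ≤ γ ∧ γ < δ) → δ ∈ C)

/-- The order type of a set `S` of ordinals: the unique ordinal order-isomorphic
to `S` (with the order inherited from the ordinals), whenever `S` is set-sized. -/
noncomputable def otp (S : Set Ordinal.{u}) : Ordinal.{u} :=
  sInf {o : Ordinal.{u} | Ordinal.lift.{u + 1} o =
    Ordinal.type (Subrel ((· < ·) : Ordinal.{u} → Ordinal.{u} → Prop) (· ∈ S))}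

/-- One-sided step: catch the image of `f` below `β` inside the image of `g`. -/
lemma aux_step {μ : Cardinal} (hreg : μ.IsRegular) {ζ : Ordinal}
    {f g : Ordinal → Ordinal}
    (hf : Set.BijOn f (Set.Iio μ.ord) (Set.Iio ζ))
    (hg : Set.BijOn g (Set.Iio μ.ord) (Set.Iio ζ))
    {β : Ordinal} (hβ : β < μ.ord) :
    ∃ γ < μ.ord, f '' Set.Iio β ⊆ g '' Set.Iio γ := by
  have hord : Order.IsSuccLimit μ.ord := Cardinal.isSuccLimit_ord hreg.aleph0_le
  have key : ∀ a, a < β → ∃ η, η < μ.ord ∧ g η = f a := by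
    intro a ha
    have haν : a < μ.ord := ha.trans hβ
    have : f a ∈ Set.Iio ζ := hf.mapsTo haν
    obtain ⟨η, hη, hgη⟩ := hg.surjOn this
    exact ⟨η, hη, hgη⟩
  choose! η hη1 hη2 using key
  set γ : Ordinal := Ordinal.bsup β (fun a _ => η a + 1) with hγdef
  refine ⟨γ, ?_, ?_⟩
  · exact Cardinal.bsup_lt_ord_of_isRegular hreg (Cardinal.lt_ord.mp hβ)
      (fun a ha => hord.succ_lt (hη1 a ha))
  · rintro x ⟨a, ha, rfl⟩
    refine ⟨η a, ?_, hη2 a ha⟩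
    exact lt_of_lt_of_le (Order.lt_succ (η a)) (Ordinal.le_bsup (fun a _ => η a + 1) a ha)

/-- Two-sided step. -/
lemma aux_step2 {μ : Cardinal} (hreg : μ.IsRegular) {ζ : Ordinal}
    {f g : Ordinal → Ordinal}
    (hf : Set.BijOn f (Set.Iio μ.ord) (Set.Iio ζ))
    (hg : Set.BijOn g (Set.Iio μ.ord) (Set.Iio ζ))
    {β : Ordinal} (hβ : β < μ.ord) :
    ∃ γ, β ≤ γ ∧ γ < μ.ord ∧ f '' Set.Iio β ⊆ g '' Set.Iio γ ∧
      g '' Set.Iio β ⊆ f '' Set.Iio γ := by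
  obtain ⟨γ₁, hγ₁, h1⟩ := aux_step hreg hf hg hβ
  obtain ⟨γ₂, hγ₂, h2⟩ := aux_step hreg hg hf hβ
  refine ⟨max β (max γ₁ γ₂), le_max_left _ _, ?_, ?_, ?_⟩
  · exact max_lt hβ (max_lt hγ₁ hγ₂)
  · exact h1.trans (Set.image_mono (Set.Iio_subset_Iio
      ((le_max_left _ _).trans (le_max_right _ _))))
  · exact h2.trans (Set.image_mono (Set.Iio_subset_Iio
      ((le_max_right _ _).trans (le_max_right _ _))))

theorem stmt_1 (μ : Cardinal) (hreg : μ.IsRegular) (hunc : Cardinal.aleph0 < μ)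
    (ζ : Ordinal) (hμζ : μ.ord ≤ ζ) (hcard : ζ.card = μ)
    (f g : Ordinal → Ordinal)
    (hf : Set.BijOn f (Set.Iio μ.ord) (Set.Iio ζ))
    (hg : Set.BijOn g (Set.Iio μ.ord) (Set.Iio ζ)) :
    ∃ C, IsClubIn C μ.ord ∧
      ∀ γ ∈ C, otp (f '' Set.Iio γ) = otp (g '' Set.Iio γ) := by
  set ν := μ.ord with hν
  refine ⟨{γ | γ < ν ∧ f '' Set.Iio γ = g '' Set.Iio γ}, ⟨?_, ?_, ?_⟩, ?_⟩
  · intro γ hγ; exact hγ.1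
  · -- unbounded
    intro α hα
    have H : ∀ β, β < ν → ∃ γ, β ≤ γ ∧ γ < ν ∧ f '' Set.Iio β ⊆ g '' Set.Iio γ ∧
        g '' Set.Iio β ⊆ f '' Set.Iio γ := fun β hβ => aux_step2 hreg hf hg hβ
    choose! step h1 h2 h3 h4 using H
    set a : ℕ → Ordinal := fun n => step^[n] α with ha
    have hlt : ∀ n, a n < ν := by
      intro n
      induction n with
      | zero => exact hα
      | succ n ih =>
        have : a (n + 1) = step (a n) := Function.iterate_succ_apply' step n α
        rw [this]; exact h2 _ ih
    have hsucc : ∀ n, a (n + 1) = step (a n) := fun n =>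
      Function.iterate_succ_apply' step n α
    set γ := iSup a with hγ
    have hγν : γ < ν := by
      apply Cardinal.iSup_lt_ord_lift_of_isRegular hreg _ hlt
      simpa using hunc
    refine ⟨γ, ⟨hγν, ?_⟩, Ordinal.le_iSup a 0⟩
    have hle : ∀ n, a n ≤ γ := Ordinal.le_iSup a
    apply Set.Subset.antisymm
    · rintro x ⟨b, hb, rfl⟩
      obtain ⟨n, hn⟩ := Ordinal.lt_iSup_iff.mp (show b < iSup a from hb)
      have : f b ∈ g '' Set.Iio (a (n + 1)) := by
        rw [hsucc n]
        exact h3 _ (hlt n) ⟨b, hn, rfl⟩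
      exact Set.image_mono (Set.Iio_subset_Iio (hle (n + 1))) this
    · rintro x ⟨b, hb, rfl⟩
      obtain ⟨n, hn⟩ := Ordinal.lt_iSup_iff.mp (show b < iSup a from hb)
      have : g b ∈ f '' Set.Iio (a (n + 1)) := by
        rw [hsucc n]
        exact h4 _ (hlt n) ⟨b, hn, rfl⟩
      exact Set.image_mono (Set.Iio_subset_Iio (hle (n + 1))) this
  · -- closed
    intro δ hδν hδlim H
    refine ⟨hδν, ?_⟩
    apply Set.Subset.antisymm
    · rintro x ⟨b, hb, rfl⟩
      obtain ⟨γ, ⟨hγν, hγeq⟩, hbγ, hγδ⟩ := H (b + 1) (hδlim.succ_lt hb)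
      have : f b ∈ g '' Set.Iio γ := by
        rw [← hγeq]
        exact ⟨b, lt_of_lt_of_le (Order.lt_succ b) hbγ, rfl⟩
      exact Set.image_mono (Set.Iio_subset_Iio hγδ.le) this
    · rintro x ⟨b, hb, rfl⟩
      obtain ⟨γ, ⟨hγν, hγeq⟩, hbγ, hγδ⟩ := H (b + 1) (hδlim.succ_lt hb)
      have : g b ∈ f '' Set.Iio γ := by
        rw [hγeq]
        exact ⟨b, lt_of_lt_of_le (Order.lt_succ b) hbγ, rfl⟩
      exact Set.image_mono (Set.Iio_subset_Iio hγδ.le) this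
  · intro γ hγ
    rw [hγ.2]
end

section
/- Let μ be an uncountable regular cardinal, let ζ be an ordinal with μ ≤ ζ and |ζ| = μ, and let A be a set of ordinals. Suppose there is a bijection f₀ from the ordinals below μ onto the ordinals below ζ such that: (ζ ∈ A if and only if there is a club C in μ with otp(f₀ '' γ) ∈ A for every γ ∈ C) and (ζ ∉ A if and only if there is a club C in μ with otp(f₀ '' γ) ∉ A for every γ ∈ C). Then the following are equivalent: (1) ζ ∈ A; (2) there exist a bijection f from the ordinals below μ onto the ordinals below ζ and a club C in μ such that otp(f '' γ) ∈ A for every γ ∈ C; (3) for every bijection f from the ordinals below μ onto the ordinals below ζ there exists a club C in μ such that otp(f '' γ) ∈ A for every γ ∈ C; (4) for every bijection f from the ordinals below μ onto the ordinals below ζ and every club C in μ, there exists γ ∈ C with otp(f '' γ) ∈ A (i.e. C is not contained in {γ < μ : otp(f '' γ) ∉ A}). -/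
universe u

open Ordinal Set Cardinal

lemma closure_lemma {μ : Cardinal.{u}} (hreg : μ.IsRegular) (hunc : ℵ₀ < μ)
    (b : Ordinal.{u} → Ordinal.{u}) (hb : ∀ α < μ.ord, b α < μ.ord) :
    ∀ α < μ.ord, ∃ δ, α < δ ∧ δ < μ.ord ∧ Order.IsSuccLimit δ ∧ ∀ β < δ, b β < δ := by
  intro α hα
  have hlim : Order.IsSuccLimit μ.ord := Cardinal.isSuccLimit_ord hreg.aleph0_le
  have hcof : μ.ord.cof = μ := hreg.cof_eq
  set N : Ordinal.{u} → Ordinal.{u} :=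
    fun x => (Ordinal.bsup.{u,u} x (fun ξ _ => b ξ) ⊔ x) + 1 with hN_def
  have hN : ∀ x < μ.ord, N x < μ.ord := by
    intro x hx
    have h1 : Ordinal.bsup.{u,u} x (fun ξ _ => b ξ) < μ.ord :=
      Ordinal.bsup_lt_ord (by rw [hcof]; exact Cardinal.lt_ord.1 hx)
        (fun i hi => hb i (hi.trans hx))
    have := hlim.succ_lt (max_lt h1 hx)
    rwa [← Ordinal.add_one_eq_succ] at this
  set c : ℕ → Ordinal.{u} := fun n => Nat.rec α (fun _ ih => N ih) n with hc_def
  have hc_lt : ∀ n, c n < μ.ord := by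
    intro n
    induction n with
    | zero => exact hα
    | succ n ih => exact hN _ ih
  have hc_succ : ∀ n, c (n+1) = N (c n) := fun n => rfl
  have hc_mono : ∀ n, c n < c (n+1) := by
    intro n
    rw [hc_succ]
    calc c n ≤ _ ⊔ c n := le_max_right _ _
      _ < _ + 1 := lt_add_one _
  set δ : Ordinal.{u} := ⨆ n, c n with hδ_def
  have hδ : δ < μ.ord := by
    rw [hδ_def]
    exact Ordinal.iSup_lt_ord_lift (f := c) (by rw [hcof, Cardinal.mk_nat, Cardinal.lift_aleph0]; exact hunc) hc_lt
  have hlt : ∀ β < δ, ∃ n, β < c n := fun β hβ => Ordinal.lt_iSup_iff.1 hβ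
  have hle : ∀ n, c n ≤ δ := Ordinal.le_iSup c
  have hαδ : α < δ := lt_of_lt_of_le (hc_mono 0) (hle 1)
  refine ⟨δ, hαδ, hδ, Ordinal.isSuccLimit_iff.2 ⟨?_, Order.isSuccPrelimit_of_succ_lt ?_⟩, ?_⟩
  · intro h0
    exact absurd (h0 ▸ hαδ) (not_lt_zero (a := α))
  · intro a ha
    obtain ⟨n, hn⟩ := hlt a ha
    have : Order.succ a ≤ c n := Order.succ_le_of_lt hn
    exact lt_of_le_of_lt this (lt_of_lt_of_le (hc_mono n) (hle (n+1)))
  · intro β hβ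
    obtain ⟨n, hn⟩ := hlt β hβ
    have h1 : b β ≤ Ordinal.bsup.{u,u} (c n) (fun ξ _ => b ξ) := Ordinal.le_bsup _ β hn
    have h2 : b β < c (n+1) := by
      rw [hc_succ]
      exact lt_of_le_of_lt (h1.trans (le_max_left _ _)) (lt_add_one _)
    exact lt_of_lt_of_le h2 (hle (n+1))

lemma club_nonempty {μ : Cardinal.{u}} (hreg : μ.IsRegular)
    {C : Set Ordinal.{u}} (hC : IsClubIn C μ.ord) : ∃ γ, γ ∈ C := by
  obtain ⟨γ, hγ, -⟩ := hC.2.1 0 hreg.ord_pos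
  exact ⟨γ, hγ⟩

lemma club_inter {μ : Cardinal.{u}} (hreg : μ.IsRegular) (hunc : ℵ₀ < μ)
    {C C' : Set Ordinal.{u}} (hC : IsClubIn C μ.ord) (hC' : IsClubIn C' μ.ord) :
    IsClubIn (C ∩ C') μ.ord := by
  classical
  have hlim : Order.IsSuccLimit μ.ord := Cardinal.isSuccLimit_ord hreg.aleph0_le
  have hsucc : ∀ x : Ordinal.{u}, x < μ.ord → x + 1 < μ.ord := by
    intro x hx
    rw [Ordinal.add_one_eq_succ]
    exact hlim.succ_lt hx
  set b : Ordinal.{u} → Ordinal.{u} := fun x =>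
    if h : x + 1 < μ.ord then (hC.2.1 (x+1) h).choose ⊔ (hC'.2.1 (x+1) h).choose else 0
    with hb_def
  have hb : ∀ x < μ.ord, b x < μ.ord := by
    intro x hx
    have h := hsucc x hx
    rw [hb_def]; simp only [dif_pos h]
    exact max_lt (hC.1 (hC.2.1 (x+1) h).choose_spec.1) (hC'.1 (hC'.2.1 (x+1) h).choose_spec.1)
  have key : ∀ δ < μ.ord, Order.IsSuccLimit δ → (∀ β < δ, b β < δ) → δ ∈ C ∩ C' := by
    intro δ hδ hδlim hcl
    have hin : ∀ β < δ, β + 1 < μ.ord := fun β hβ => hsucc β (hβ.trans hδ)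
    constructor
    · refine hC.2.2 δ hδ hδlim (fun β hβ => ?_)
      have h := hin β hβ
      obtain ⟨hγC, hγle⟩ := (hC.2.1 (β+1) h).choose_spec
      refine ⟨_, hγC, le_of_lt (lt_of_lt_of_le (lt_add_one β) hγle), ?_⟩
      calc (hC.2.1 (β+1) h).choose ≤ b β := by rw [hb_def]; simp only [dif_pos h]; exact le_max_left _ _
        _ < δ := hcl β hβ
    · refine hC'.2.2 δ hδ hδlim (fun β hβ => ?_)
      have h := hin β hβ
      obtain ⟨hγC, hγle⟩ := (hC'.2.1 (β+1) h).choose_spec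
      refine ⟨_, hγC, le_of_lt (lt_of_lt_of_le (lt_add_one β) hγle), ?_⟩
      calc (hC'.2.1 (β+1) h).choose ≤ b β := by rw [hb_def]; simp only [dif_pos h]; exact le_max_right _ _
        _ < δ := hcl β hβ
  refine ⟨fun x hx => hC.1 hx.1, ?_, ?_⟩
  · intro α hα
    obtain ⟨δ, hαδ, hδ, hδlim, hcl⟩ := closure_lemma hreg hunc b hb α hα
    exact ⟨δ, key δ hδ hδlim hcl, le_of_lt hαδ⟩
  · intro δ hδ hδlim hub
    constructor
    · exact hC.2.2 δ hδ hδlim (fun α hα => (hub α hα).imp (fun γ h => ⟨h.1.1, h.2⟩))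
    · exact hC'.2.2 δ hδ hδlim (fun α hα => (hub α hα).imp (fun γ h => ⟨h.1.2, h.2⟩))

lemma agree_club {μ : Cardinal.{u}} (hreg : μ.IsRegular) (hunc : ℵ₀ < μ)
    {ζ : Ordinal.{u}} {f g : Ordinal.{u} → Ordinal.{u}}
    (hf : Set.BijOn f (Set.Iio μ.ord) (Set.Iio ζ))
    (hg : Set.BijOn g (Set.Iio μ.ord) (Set.Iio ζ)) :
    ∃ D, IsClubIn D μ.ord ∧ ∀ γ ∈ D, f '' Set.Iio γ = g '' Set.Iio γ := by
  classical
  have hlim : Order.IsSuccLimit μ.ord := Cardinal.isSuccLimit_ord hreg.aleph0_le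
  have hcof : μ.ord.cof = μ := hreg.cof_eq
  set f' : Ordinal.{u} → Ordinal.{u} := Function.invFunOn f (Set.Iio μ.ord) with hf'_def
  set g' : Ordinal.{u} → Ordinal.{u} := Function.invFunOn g (Set.Iio μ.ord) with hg'_def
  have hg'mem : ∀ x ∈ Set.Iio ζ, g' x ∈ Set.Iio μ.ord ∧ g (g' x) = x := by
    intro x hx
    have h : ∃ a ∈ Set.Iio μ.ord, g a = x := hg.surjOn hx
    exact ⟨Function.invFunOn_mem h, Function.invFunOn_eq h⟩
  have hf'mem : ∀ x ∈ Set.Iio ζ, f' x ∈ Set.Iio μ.ord ∧ f (f' x) = x := by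
    intro x hx
    have h : ∃ a ∈ Set.Iio μ.ord, f a = x := hf.surjOn hx
    exact ⟨Function.invFunOn_mem h, Function.invFunOn_eq h⟩
  set b : Ordinal.{u} → Ordinal.{u} := fun α =>
    Ordinal.bsup.{u,u} (α+1) (fun ξ _ => g' (f ξ) ⊔ f' (g ξ)) + 1 with hb_def
  have hb : ∀ α < μ.ord, b α < μ.ord := by
    intro α hα
    have hα1 : α + 1 < μ.ord := by
      rw [Ordinal.add_one_eq_succ]; exact hlim.succ_lt hα
    have hsup : Ordinal.bsup.{u,u} (α+1) (fun ξ _ => g' (f ξ) ⊔ f' (g ξ)) < μ.ord := by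
      refine Ordinal.bsup_lt_ord (by rw [hcof]; exact Cardinal.lt_ord.1 hα1) ?_
      intro ξ hξ
      have hξμ : ξ ∈ Set.Iio μ.ord := hξ.trans hα1
      exact max_lt (hg'mem (f ξ) (hf.mapsTo hξμ)).1 (hf'mem (g ξ) (hg.mapsTo hξμ)).1
    rw [hb_def]
    have := hlim.succ_lt hsup
    rwa [← Ordinal.add_one_eq_succ] at this
  have hbound : ∀ ξ γ : Ordinal.{u}, ξ < γ → (∀ β < γ, b β < γ) →
      g' (f ξ) < γ ∧ f' (g ξ) < γ := by
    intro ξ γ hξ hcl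
    have h1 : g' (f ξ) ⊔ f' (g ξ) ≤ Ordinal.bsup.{u,u} (ξ+1) (fun ξ' _ => g' (f ξ') ⊔ f' (g ξ')) :=
      Ordinal.le_bsup _ ξ (lt_add_one ξ)
    have h2 : g' (f ξ) ⊔ f' (g ξ) < b ξ := lt_of_le_of_lt h1 (by rw [hb_def]; exact lt_add_one _)
    have h3 := lt_of_lt_of_le h2 (le_of_lt (hcl ξ hξ))
    exact ⟨lt_of_le_of_lt (le_max_left _ _) h3, lt_of_le_of_lt (le_max_right _ _) h3⟩
  refine ⟨{γ | γ < μ.ord ∧ Order.IsSuccLimit γ ∧ ∀ β < γ, b β < γ}, ⟨?_, ?_, ?_⟩, ?_⟩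
  · exact fun γ hγ => hγ.1
  · intro α hα
    obtain ⟨δ, hαδ, hδ, hδlim, hcl⟩ := closure_lemma hreg hunc b hb α hα
    exact ⟨δ, ⟨hδ, hδlim, hcl⟩, le_of_lt hαδ⟩
  · intro δ hδ hδlim hub
    refine ⟨hδ, hδlim, fun β hβ => ?_⟩
    have hβ1 : β + 1 < δ := by rw [Ordinal.add_one_eq_succ]; exact hδlim.succ_lt hβ
    obtain ⟨γ, ⟨-, -, hγcl⟩, hγle, hγlt⟩ := hub (β+1) hβ1
    exact lt_trans (hγcl β (lt_of_lt_of_le (lt_add_one β) hγle)) hγlt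
  · rintro γ ⟨hγμ, -, hγcl⟩
    ext x
    constructor
    · rintro ⟨ξ, hξ, rfl⟩
      have hξμ : ξ ∈ Set.Iio μ.ord := lt_trans hξ hγμ
      have hfx : f ξ ∈ Set.Iio ζ := hf.mapsTo hξμ
      exact ⟨g' (f ξ), (hbound ξ γ hξ hγcl).1, (hg'mem (f ξ) hfx).2⟩
    · rintro ⟨ξ, hξ, rfl⟩
      have hξμ : ξ ∈ Set.Iio μ.ord := lt_trans hξ hγμ
      have hgx : g ξ ∈ Set.Iio ζ := hg.mapsTo hξμ
      exact ⟨f' (g ξ), (hbound ξ γ hξ hγcl).2, (hf'mem (g ξ) hgx).2⟩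


theorem stmt_3 (μ : Cardinal) (hreg : μ.IsRegular) (hunc : Cardinal.aleph0 < μ)
    (ζ : Ordinal) (hμζ : μ.ord ≤ ζ) (hcard : ζ.card = μ)
    (A : Set Ordinal) (f₀ : Ordinal → Ordinal)
    (hf₀ : Set.BijOn f₀ (Set.Iio μ.ord) (Set.Iio ζ))
    (hmem : ζ ∈ A ↔ ∃ C, IsClubIn C μ.ord ∧ ∀ γ ∈ C, otp (f₀ '' Set.Iio γ) ∈ A)
    (hnotmem : ζ ∉ A ↔ ∃ C, IsClubIn C μ.ord ∧ ∀ γ ∈ C, otp (f₀ '' Set.Iio γ) ∉ A) :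
    (ζ ∈ A ↔ ∃ f, Set.BijOn f (Set.Iio μ.ord) (Set.Iio ζ) ∧
        ∃ C, IsClubIn C μ.ord ∧ ∀ γ ∈ C, otp (f '' Set.Iio γ) ∈ A) ∧
    ((∃ f, Set.BijOn f (Set.Iio μ.ord) (Set.Iio ζ) ∧
        ∃ C, IsClubIn C μ.ord ∧ ∀ γ ∈ C, otp (f '' Set.Iio γ) ∈ A) ↔
      (∀ f, Set.BijOn f (Set.Iio μ.ord) (Set.Iio ζ) →
        ∃ C, IsClubIn C μ.ord ∧ ∀ γ ∈ C, otp (f '' Set.Iio γ) ∈ A)) ∧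
    ((∀ f, Set.BijOn f (Set.Iio μ.ord) (Set.Iio ζ) →
        ∃ C, IsClubIn C μ.ord ∧ ∀ γ ∈ C, otp (f '' Set.Iio γ) ∈ A) ↔
      (∀ f, Set.BijOn f (Set.Iio μ.ord) (Set.Iio ζ) →
        ∀ C, IsClubIn C μ.ord → ∃ γ ∈ C, otp (f '' Set.Iio γ) ∈ A)) := by
  have key13 : ζ ∈ A → ∀ f, Set.BijOn f (Set.Iio μ.ord) (Set.Iio ζ) →
      ∃ C, IsClubIn C μ.ord ∧ ∀ γ ∈ C, otp (f '' Set.Iio γ) ∈ A := by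
    intro hζ f hfb
    obtain ⟨C, hCclub, hCA⟩ := hmem.1 hζ
    obtain ⟨D, hDclub, hDeq⟩ := agree_club hreg hunc hfb hf₀
    refine ⟨C ∩ D, club_inter hreg hunc hCclub hDclub, ?_⟩
    rintro γ ⟨hγC, hγD⟩
    rw [hDeq γ hγD]
    exact hCA γ hγC
  have key21 : (∃ f, Set.BijOn f (Set.Iio μ.ord) (Set.Iio ζ) ∧
      ∃ C, IsClubIn C μ.ord ∧ ∀ γ ∈ C, otp (f '' Set.Iio γ) ∈ A) → ζ ∈ A := by
    rintro ⟨f, hfb, C, hCclub, hCA⟩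
    by_contra hζ
    obtain ⟨C', hC'club, hC'A⟩ := hnotmem.1 hζ
    obtain ⟨D, hDclub, hDeq⟩ := agree_club hreg hunc hfb hf₀
    obtain ⟨γ, hγ⟩ := club_nonempty hreg
      (club_inter hreg hunc hCclub (club_inter hreg hunc hC'club hDclub))
    exact hC'A γ hγ.2.1 (by rw [← hDeq γ hγ.2.2]; exact hCA γ hγ.1)
  have key41 : (∀ f, Set.BijOn f (Set.Iio μ.ord) (Set.Iio ζ) →
      ∀ C, IsClubIn C μ.ord → ∃ γ ∈ C, otp (f '' Set.Iio γ) ∈ A) → ζ ∈ A := by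
    intro h4
    by_contra hζ
    obtain ⟨C, hCclub, hCA⟩ := hnotmem.1 hζ
    obtain ⟨γ, hγC, hγA⟩ := h4 f₀ hf₀ C hCclub
    exact hCA γ hγC hγA
  refine ⟨⟨fun h => ⟨f₀, hf₀, key13 h f₀ hf₀⟩, key21⟩,
    ⟨fun h2 => key13 (key21 h2), fun h3 => ⟨f₀, hf₀, h3 f₀ hf₀⟩⟩, ?_, ?_⟩
  · intro h3 f hfb C hCclub
    obtain ⟨C', hC'club, hC'A⟩ := h3 f hfb
    obtain ⟨γ, hγ⟩ := club_nonempty hreg (club_inter hreg hunc hCclub hC'club)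
    exact ⟨γ, hγ.1, hC'A γ hγ.2⟩
  · intro h4 f hfb
    exact key13 (key41 h4) f hfb
end
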